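/- The set D⁺ is closed under the product rule (f∂^i)·(g∂^j) = Σ_{r≥0} C(i,r) f ∂^r(g) ∂^{i+j−r}: the product of two elements of D⁺ is well defined (each coefficient is a convergent sum in the complete graded algebra A = ∏_{i≥0} A_i) and again lies in D⁺, and with this product D⁺ is a unital associative algebra. Moreover (D⁻)₊ ⊆ D⁻ ∩ D⁺ and (D⁺)₋ ⊆ D⁻ ∩ D⁺. -/

import Mathlib

/-!
STATEMENT 1: Over a complete graded algebra A = ∏_{i≥0} A_i, the set
D⁺ = { Σ_{i∈ℤ} Σ_{j≥max(0,k−i)} a_{i,j} ∂^i } of pseudo-differential operators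
of the second type is closed under the product rule
(f∂^i)·(g∂^j) = Σ_{r≥0} C(i,r) f ∂^r(g) ∂^{i+j−r}: the product is well defined
(each graded component of each coefficient is a finite sum) and lies in D⁺,
with which D⁺ is a unital associative algebra; moreover
(D⁻)₊ ⊆ D⁻ ∩ D⁺ and (D⁺)₋ ⊆ D⁻ ∩ D⁺.

A series Σ_{i∈ℤ} Σ_{j≥0} a_{i,j} ∂^i with a_{i,j} ∈ A_j is modelled by the
function (i, j) ↦ a_{i,j} : ℤ → ℕ → R, the graded pieces A_j being submodules
of an ambient commutative ring R.
-/

/-- Generalized binomial coefficient `C(i,r)` for an integer `i`. -/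
def zbinom (i : ℤ) (r : ℕ) : ℤ :=
  if 0 ≤ i then ((i.toNat).choose r : ℤ)
  else (-1 : ℤ) ^ r * ((((r : ℤ) - i - 1).toNat).choose r : ℤ)

/-- The summand, indexed by `(i, j', p)`, of the degree-`m` component of the
coefficient of `∂^n` in the product of the two series `F` and `G`: with
`r := i + j' − n`, it is the degree-`m` part of `C(i,r)·F_{i,p}·∂^r(G_{j'})`. -/
def gTerm {R : Type*} [CommRing R] (d : R → R) (F G : ℤ → ℕ → R)
    (n : ℤ) (m : ℕ) : ℤ × ℤ × ℕ → R := fun x =>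
  if n ≤ x.1 + x.2.1 ∧ x.2.2 + (x.1 + x.2.1 - n).toNat ≤ m then
    zbinom x.1 (x.1 + x.2.1 - n).toNat •
      (F x.1 x.2.2 *
        d^[(x.1 + x.2.1 - n).toNat]
          (G x.2.1 (m - x.2.2 - (x.1 + x.2.1 - n).toNat)))
  else 0

/-- The product of two series of pseudo-differential operators. -/
noncomputable def gMul {R : Type*} [CommRing R] (d : R → R)
    (F G : ℤ → ℕ → R) : ℤ → ℕ → R :=
  fun n m => ∑ᶠ x : ℤ × ℤ × ℕ, gTerm d F G n m x

/-- The coefficients have homogeneous components in the graded pieces. -/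
def gmem {R : Type*} [CommRing R] [Algebra ℚ R] (𝒜 : ℕ → Submodule ℚ R)
    (F : ℤ → ℕ → R) : Prop := ∀ (i : ℤ) (j : ℕ), F i j ∈ 𝒜 j

/-- Membership in D⁺: there is k ∈ ℤ with a_{i,j} = 0 for j < k − i. -/
def isDP {R : Type*} [CommRing R] (F : ℤ → ℕ → R) : Prop :=
  ∃ k : ℤ, ∀ (i : ℤ) (j : ℕ), (j : ℤ) < k - i → F i j = 0

/-- Membership in D⁻: the coefficients vanish for large i. -/
def isDM {R : Type*} [CommRing R] (F : ℤ → ℕ → R) : Prop :=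
  ∃ N : ℤ, ∀ i : ℤ, N < i → ∀ j : ℕ, F i j = 0

/-- The identity operator. -/
def gOne {R : Type*} [CommRing R] : ℤ → ℕ → R :=
  fun i j => if i = 0 ∧ j = 0 then 1 else 0

/-- The differential part A₊ of a series. -/
def gPlus {R : Type*} [CommRing R] (F : ℤ → ℕ → R) : ℤ → ℕ → R :=
  fun i j => if 0 ≤ i then F i j else 0

/-- The negative part A₋ of a series. -/
def gMinus {R : Type*} [CommRing R] (F : ℤ → ℕ → R) : ℤ → ℕ → R :=
  fun i j => if i < 0 then F i j else 0

open Finset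

lemma descPochhammer_eval_int (i : ℤ) (r : ℕ) :
    (descPochhammer ℤ r).eval i = (r.factorial : ℤ) * zbinom i r := by
  rcases le_or_gt 0 i with hi | hi
  · rw [zbinom, if_pos hi]
    have : i = ((i.toNat : ℕ) : ℤ) := (Int.toNat_of_nonneg hi).symm
    rw [this, descPochhammer_eval_eq_descFactorial ℤ i.toNat r,
      Nat.descFactorial_eq_factorial_mul_choose]
    simp only [Int.toNat_natCast]; push_cast; ring
  · rw [zbinom, if_neg (not_le.mpr hi)]
    rw [descPochhammer_eval_eq_ascPochhammer]
    have h1 : i - (r : ℤ) + 1 = -((r : ℤ) - i - 1) := by ring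
    rw [h1, ascPochhammer_eval_neg_eq_descPochhammer]
    have h2 : ((r : ℤ) - i - 1) = ((((r : ℤ) - i - 1).toNat : ℕ) : ℤ) := by
      rw [Int.toNat_of_nonneg]; omega
    rw [h2, descPochhammer_eval_eq_descFactorial ℤ _ r,
      Nat.descFactorial_eq_factorial_mul_choose]
    simp only [Int.toNat_natCast]; push_cast; ring

lemma zbinom_eq_choose (i : ℤ) (r : ℕ) : zbinom i r = Ring.choose i r := by
  have h := Ring.descPochhammer_eq_factorial_smul_choose (R := ℤ) i r
  have h2 : (descPochhammer ℤ r).smeval i = (descPochhammer ℤ r).eval i := by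
    rw [← Polynomial.eval_eq_smeval]
  rw [h2, descPochhammer_eval_int] at h
  have hr : (r.factorial : ℤ) ≠ 0 := by exact_mod_cast r.factorial_ne_zero
  rw [nsmul_eq_mul] at h
  exact mul_left_cancel₀ hr h

lemma zbinom_key (i j : ℤ) (r s : ℕ) :
    zbinom i r * zbinom (i + j - r) s =
      ∑ τ ∈ Finset.range (s + 1),
        zbinom i (r + s - τ) * ((r + s - τ).choose r : ℤ) * zbinom j τ := by
  simp only [zbinom_eq_choose]
  have hij : i + j - (r : ℤ) = (i - r) + j := by ring
  rw [hij, Ring.add_choose_eq s (Commute.all _ _), Finset.mul_sum]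
  rw [Finset.Nat.sum_antidiagonal_eq_sum_range_succ_mk]
  rw [← Finset.sum_range_reflect (fun τ => Ring.choose i (r + s - τ) *
      ((r + s - τ).choose r : ℤ) * Ring.choose j τ) (s + 1)]
  refine Finset.sum_congr rfl fun k hk => ?_
  have hks : k ≤ s := by simpa [Nat.lt_succ_iff] using hk
  have h1 : s + 1 - 1 - k = s - k := by omega
  have h2 : r + s - (s - k) = r + k := by omega
  rw [h1, h2]
  have h3 := Ring.choose_smul_choose (R := ℤ) i (Nat.le_add_right r k)
  rw [Nat.add_sub_cancel_left] at h3
  rw [← mul_assoc, ← h3, nsmul_eq_mul]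
  ring

section DIter
variable {R : Type*} [CommRing R] [Algebra ℚ R] (d : Derivation ℚ R R)

lemma dIter_apply (k : ℕ) (x : R) :
    (⇑d)^[k] x = ((d.toLinearMap : R →ₗ[ℚ] R) ^ k) x := by
  rw [Module.End.pow_apply]; rfl

lemma dIter_zero (k : ℕ) : (⇑d)^[k] (0 : R) = 0 := by
  rw [dIter_apply]; exact map_zero _

lemma dIter_add (k : ℕ) (x y : R) :
    (⇑d)^[k] (x + y) = (⇑d)^[k] x + (⇑d)^[k] y := by
  simp only [dIter_apply]; exact map_add _ _ _

lemma dIter_zsmul (k : ℕ) (c : ℤ) (x : R) :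
    (⇑d)^[k] (c • x) = c • (⇑d)^[k] x := by
  simp only [dIter_apply]; exact map_zsmul _ _ _

lemma dIter_qsmul (k : ℕ) (c : ℚ) (x : R) :
    (⇑d)^[k] (c • x) = c • (⇑d)^[k] x := by
  simp only [dIter_apply]; exact map_smul _ _ _

lemma d_apply_mul (x y : R) : d (x * y) = d x * y + x * d y := by
  rw [Derivation.leibniz]; simp [smul_eq_mul]; ring

open Finset Nat in
lemma dIter_mul (k : ℕ) (x y : R) :
    (⇑d)^[k] (x * y) =
      ∑ ij ∈ Finset.HasAntidiagonal.antidiagonal k,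
        k.choose ij.1 • ((⇑d)^[ij.1] x * (⇑d)^[ij.2] y) := by
  induction k with
  | zero => simp
  | succ n ih =>
    rw [Finset.sum_antidiagonal_choose_succ_nsmul
      (M := R) (fun i j => (⇑d)^[i] x * (⇑d)^[j] y) n]
    simp only [Function.iterate_succ_apply', ih, map_sum, map_nsmul, d_apply_mul,
      smul_add, sum_add_distrib]
    rw [add_comm]
    congr 1
    refine sum_congr rfl fun ij hij ↦ ?_
    rw [n.choose_symm_of_eq_add (Finset.HasAntidiagonal.mem_antidiagonal.1 hij).symm]

lemma dIter_one (k : ℕ) : (⇑d)^[k] (1 : R) = if k = 0 then 1 else 0 := by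
  cases k with
  | zero => simp
  | succ n =>
    rw [Function.iterate_succ_apply]
    simp only [Derivation.map_one_eq_zero, dIter_zero, Nat.succ_ne_zero, if_neg]
    simp

lemma dIter_mem {𝒜 : ℕ → Submodule ℚ R}
    (hgder : ∀ (i : ℕ) (a : R), a ∈ 𝒜 i → d a ∈ 𝒜 (i + 1))
    {q : ℕ} (k : ℕ) {a : R} (ha : a ∈ 𝒜 q) : (⇑d)^[k] a ∈ 𝒜 (q + k) := by
  induction k with
  | zero => simpa using ha
  | succ n ih =>
    rw [Function.iterate_succ_apply', ← Nat.add_assoc]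
    exact hgder _ _ ih

end DIter

section Main
variable {R : Type*} [CommRing R] [Algebra ℚ R] (d : Derivation ℚ R R)

lemma gTerm_ne_zero {F G : ℤ → ℕ → R} {n : ℤ} {m : ℕ} {x : ℤ × ℤ × ℕ}
    (hx : gTerm (⇑d) F G n m x ≠ 0) :
    (n ≤ x.1 + x.2.1 ∧ x.2.2 + (x.1 + x.2.1 - n).toNat ≤ m) ∧
      F x.1 x.2.2 ≠ 0 ∧
      G x.2.1 (m - x.2.2 - (x.1 + x.2.1 - n).toNat) ≠ 0 := by
  by_cases h : n ≤ x.1 + x.2.1 ∧ x.2.2 + (x.1 + x.2.1 - n).toNat ≤ m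
  · rw [gTerm, if_pos h] at hx
    refine ⟨h, fun hF => hx ?_, fun hG => hx ?_⟩
    · rw [hF, zero_mul, smul_zero]
    · rw [hG, dIter_zero, mul_zero, smul_zero]
  · rw [gTerm, if_neg h] at hx; exact absurd rfl hx

lemma support_gTerm_finite {F G : ℤ → ℕ → R} {k₁ k₂ : ℤ}
    (hF : ∀ (i : ℤ) (j : ℕ), (j : ℤ) < k₁ - i → F i j = 0)
    (hG : ∀ (i : ℤ) (j : ℕ), (j : ℤ) < k₂ - i → G i j = 0)
    (n : ℤ) (m : ℕ) :
    (Function.support (gTerm (⇑d) F G n m)).Finite := by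
  apply Set.Finite.subset (Set.finite_Icc
    ((k₁ - m, k₂ - m, 0) : ℤ × ℤ × ℕ)
    ((n + 2 * m - (k₂ - m), n + 2 * m - (k₁ - m), m) : ℤ × ℤ × ℕ))
  intro x hx
  obtain ⟨⟨h1, h2⟩, hFx, hGx⟩ := gTerm_ne_zero d hx
  have hF' : ¬ ((x.2.2 : ℤ) < k₁ - x.1) := fun h => hFx (hF _ _ h)
  have hG' : ¬ (((m - x.2.2 - (x.1 + x.2.1 - n).toNat : ℕ) : ℤ) < k₂ - x.2.1) :=
    fun h => hGx (hG _ _ h)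
  simp only [Set.mem_Icc, Prod.le_def]
  try dsimp only
  push_cast at hF' hG' ⊢
  omega

lemma gmem_gMul {𝒜 : ℕ → Submodule ℚ R}
    (hgmul : ∀ (i j : ℕ) (a b : R), a ∈ 𝒜 i → b ∈ 𝒜 j → a * b ∈ 𝒜 (i + j))
    (hgder : ∀ (i : ℕ) (a : R), a ∈ 𝒜 i → d a ∈ 𝒜 (i + 1))
    {F G : ℤ → ℕ → R} (hFm : gmem 𝒜 F) (hGm : gmem 𝒜 G)
    (hF : isDP F) (hG : isDP G) : gmem 𝒜 (gMul (⇑d) F G) := by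
  obtain ⟨k₁, hk₁⟩ := hF; obtain ⟨k₂, hk₂⟩ := hG
  intro n m
  rw [gMul, finsum_eq_sum _ (support_gTerm_finite d hk₁ hk₂ n m)]
  apply Submodule.sum_mem
  intro x _
  rw [gTerm]
  split
  · next h =>
    apply zsmul_mem
    have h1 : (⇑d)^[(x.1 + x.2.1 - n).toNat]
        (G x.2.1 (m - x.2.2 - (x.1 + x.2.1 - n).toNat)) ∈
        𝒜 ((m - x.2.2 - (x.1 + x.2.1 - n).toNat) + (x.1 + x.2.1 - n).toNat) :=
      dIter_mem d hgder _ (hGm _ _)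
    have h2 := hgmul _ _ _ _ (hFm x.1 x.2.2) h1
    have hm : x.2.2 + ((m - x.2.2 - (x.1 + x.2.1 - n).toNat) +
        (x.1 + x.2.1 - n).toNat) = m := by omega
    rwa [hm] at h2
  · exact Submodule.zero_mem _

lemma isDP_gMul {F G : ℤ → ℕ → R} (hF : isDP F) (hG : isDP G) :
    isDP (gMul (⇑d) F G) := by
  obtain ⟨k₁, hk₁⟩ := hF; obtain ⟨k₂, hk₂⟩ := hG
  refine ⟨k₁ + k₂, fun n m hm => ?_⟩
  rw [gMul]
  apply finsum_eq_zero_of_forall_eq_zero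
  intro x
  by_contra hx
  obtain ⟨⟨h1, h2⟩, hFx, hGx⟩ := gTerm_ne_zero d hx
  have hF' : ¬ ((x.2.2 : ℤ) < k₁ - x.1) := fun h => hFx (hk₁ _ _ h)
  have hG' : ¬ (((m - x.2.2 - (x.1 + x.2.1 - n).toNat : ℕ) : ℤ) < k₂ - x.2.1) :=
    fun h => hGx (hk₂ _ _ h)
  push_cast at hF' hG'
  omega

end Main

section Main2
variable {R : Type*} [CommRing R] [Algebra ℚ R] (d : Derivation ℚ R R)

lemma zbinom_zero_right (i : ℤ) : zbinom i 0 = 1 := by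
  rw [zbinom]; split <;> simp

lemma gOne_apply (i : ℤ) (j : ℕ) :
    (gOne i j : R) = if i = 0 ∧ j = 0 then 1 else 0 := rfl

lemma gTerm_add_right (F G H : ℤ → ℕ → R) (n : ℤ) (m : ℕ) (x : ℤ × ℤ × ℕ) :
    gTerm (⇑d) F (G + H) n m x =
      gTerm (⇑d) F G n m x + gTerm (⇑d) F H n m x := by
  rw [gTerm, gTerm, gTerm]
  split
  · simp only [Pi.add_apply, dIter_add, mul_add, smul_add]
  · rw [add_zero]

lemma gTerm_add_left (F G H : ℤ → ℕ → R) (n : ℤ) (m : ℕ) (x : ℤ × ℤ × ℕ) :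
    gTerm (⇑d) (F + G) H n m x =
      gTerm (⇑d) F H n m x + gTerm (⇑d) G H n m x := by
  rw [gTerm, gTerm, gTerm]
  split
  · simp only [Pi.add_apply, add_mul, smul_add]
  · rw [add_zero]

lemma gTerm_smul_left (c : ℚ) (F G : ℤ → ℕ → R) (n : ℤ) (m : ℕ) (x : ℤ × ℤ × ℕ) :
    gTerm (⇑d) (c • F) G n m x = c • gTerm (⇑d) F G n m x := by
  rw [gTerm, gTerm]
  split
  · simp only [Pi.smul_apply, smul_mul_assoc]
    rw [smul_comm]
  · rw [smul_zero]

lemma gTerm_smul_right (c : ℚ) (F G : ℤ → ℕ → R) (n : ℤ) (m : ℕ) (x : ℤ × ℤ × ℕ) :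
    gTerm (⇑d) F (c • G) n m x = c • gTerm (⇑d) F G n m x := by
  rw [gTerm, gTerm]
  split
  · simp only [Pi.smul_apply, dIter_qsmul, mul_smul_comm]
    rw [smul_comm]
  · rw [smul_zero]

lemma gMul_add_right {F G H : ℤ → ℕ → R} (hF : isDP F) (hG : isDP G) (hH : isDP H) :
    gMul (⇑d) F (G + H) = gMul (⇑d) F G + gMul (⇑d) F H := by
  obtain ⟨k₁, hk₁⟩ := hF; obtain ⟨k₂, hk₂⟩ := hG; obtain ⟨k₃, hk₃⟩ := hH
  funext n m
  show (∑ᶠ x, gTerm (⇑d) F (G + H) n m x) = _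
  rw [finsum_congr (gTerm_add_right d F G H n m),
    finsum_add_distrib (support_gTerm_finite d hk₁ hk₂ n m)
      (support_gTerm_finite d hk₁ hk₃ n m)]
  rfl

lemma gMul_add_left {F G H : ℤ → ℕ → R} (hF : isDP F) (hG : isDP G) (hH : isDP H) :
    gMul (⇑d) (F + G) H = gMul (⇑d) F H + gMul (⇑d) G H := by
  obtain ⟨k₁, hk₁⟩ := hF; obtain ⟨k₂, hk₂⟩ := hG; obtain ⟨k₃, hk₃⟩ := hH
  funext n m
  show (∑ᶠ x, gTerm (⇑d) (F + G) H n m x) = _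
  rw [finsum_congr (gTerm_add_left d F G H n m),
    finsum_add_distrib (support_gTerm_finite d hk₁ hk₃ n m)
      (support_gTerm_finite d hk₂ hk₃ n m)]
  rfl

lemma gMul_smul_left (c : ℚ) {F G : ℤ → ℕ → R} (hF : isDP F) (hG : isDP G) :
    gMul (⇑d) (c • F) G = c • gMul (⇑d) F G := by
  obtain ⟨k₁, hk₁⟩ := hF; obtain ⟨k₂, hk₂⟩ := hG
  funext n m
  show (∑ᶠ x, gTerm (⇑d) (c • F) G n m x) = _
  rw [finsum_congr (gTerm_smul_left d c F G n m),
    ← smul_finsum' c (support_gTerm_finite d hk₁ hk₂ n m)]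
  rfl

lemma gMul_smul_right (c : ℚ) {F G : ℤ → ℕ → R} (hF : isDP F) (hG : isDP G) :
    gMul (⇑d) F (c • G) = c • gMul (⇑d) F G := by
  obtain ⟨k₁, hk₁⟩ := hF; obtain ⟨k₂, hk₂⟩ := hG
  funext n m
  show (∑ᶠ x, gTerm (⇑d) F (c • G) n m x) = _
  rw [finsum_congr (gTerm_smul_right d c F G n m),
    ← smul_finsum' c (support_gTerm_finite d hk₁ hk₂ n m)]
  rfl

lemma gOne_mul (F : ℤ → ℕ → R) : gMul (⇑d) gOne F = F := by
  funext n m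
  rw [gMul, finsum_eq_single _ ((0 : ℤ), n, (0 : ℕ))]
  · rw [gTerm]
    have hc : n ≤ 0 + n ∧ 0 + ((0 : ℤ) + n - n).toNat ≤ m := by
      constructor <;> omega
    rw [if_pos hc]
    have hr : ((0 : ℤ) + n - n).toNat = 0 := by omega
    rw [hr]
    have h1 : (gOne (0 : ℤ) (0 : ℕ) : R) = 1 := by rw [gOne_apply, if_pos ⟨rfl, rfl⟩]
    rw [h1, zbinom_zero_right, one_smul, one_mul]
    simp
  · rintro ⟨i, j, p⟩ hx
    rw [gTerm]
    split
    · next h =>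
      by_cases hi : i = 0 ∧ p = 0
      · obtain ⟨rfl, rfl⟩ := hi
        have hj : j ≠ n := by
          rintro rfl; exact hx rfl
        have hn : n ≤ 0 + j := h.1
        have hr : ((0 : ℤ) + j - n).toNat ≠ 0 := by omega
        obtain ⟨t, ht⟩ := Nat.exists_eq_succ_of_ne_zero hr
        have hz : zbinom 0 (((0 : ℤ) + j - n).toNat) = 0 := by
          rw [zbinom, if_pos le_rfl, ht]
          simp
        show zbinom (0 : ℤ) (((0:ℤ) + j - n).toNat) • _ = (0 : R)
        rw [hz, zero_smul]
      · have h0 : (gOne i p : R) = 0 := by rw [gOne_apply, if_neg hi]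
        show zbinom i ((i + j - n).toNat) • ((gOne i p : R) * _) = (0 : R)
        rw [h0, zero_mul, smul_zero]
    · rfl

lemma gMul_one (F : ℤ → ℕ → R) : gMul (⇑d) F gOne = F := by
  funext n m
  rw [gMul, finsum_eq_single _ (n, (0 : ℤ), m)]
  · rw [gTerm]
    have hc : n ≤ n + 0 ∧ m + (n + (0 : ℤ) - n).toNat ≤ m := by
      constructor <;> omega
    rw [if_pos hc]
    have hr : (n + (0 : ℤ) - n).toNat = 0 := by omega
    rw [hr]
    have h1 : (gOne (0 : ℤ) (m - m - 0) : R) = 1 := by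
      rw [gOne_apply, if_pos ⟨rfl, by omega⟩]
    simp only [Function.iterate_zero, id_eq]
    rw [h1, zbinom_zero_right, one_smul, mul_one]
  · rintro ⟨i, j, p⟩ hx
    rw [gTerm]
    split
    · next h =>
      by_cases hj : j = 0 ∧ m - p - (i + j - n).toNat = 0
      · obtain ⟨rfl, hq⟩ := hj
        by_cases hr : (i + (0:ℤ) - n).toNat = 0
        · exfalso
          apply hx
          have hn : n ≤ i + 0 := h.1
          have hpr : p + (i + (0:ℤ) - n).toNat ≤ m := h.2
          have hi : i = n := by omega
          have hp : p = m := by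
            rw [hr] at hpr
            omega
          rw [hi, hp]
        · obtain ⟨t, ht⟩ := Nat.exists_eq_succ_of_ne_zero hr
          have h1 : (gOne (0 : ℤ) (m - p - (i + (0:ℤ) - n).toNat) : R) = 1 := by
            rw [gOne_apply, if_pos ⟨rfl, hq⟩]
          show zbinom i ((i + (0:ℤ) - n).toNat) •
            (F i p * (⇑d)^[(i + (0:ℤ) - n).toNat]
              (gOne (0:ℤ) (m - p - (i + (0:ℤ) - n).toNat))) = (0 : R)
          rw [h1, dIter_one, ht, if_neg (Nat.succ_ne_zero t), mul_zero, smul_zero]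
      · have h0 : (gOne j (m - p - (i + j - n).toNat) : R) = 0 := by
          rw [gOne_apply, if_neg hj]
        show zbinom i ((i + j - n).toNat) •
          (F i p * (⇑d)^[(i + j - n).toNat]
            (gOne j (m - p - (i + j - n).toNat))) = (0 : R)
        rw [h0, dIter_zero, mul_zero, smul_zero]
    · rfl

lemma gPlus_props {𝒜 : ℕ → Submodule ℚ R} {F : ℤ → ℕ → R}
    (hFm : gmem 𝒜 F) (hF : isDM F) :
    gmem 𝒜 (gPlus F) ∧ isDM (gPlus F) ∧ isDP (gPlus F) := by
  obtain ⟨N, hN⟩ := hF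
  refine ⟨fun i j => ?_, ⟨N, fun i hi j => ?_⟩, ⟨0, fun i j hj => ?_⟩⟩
  · rw [gPlus]; split
    · exact hFm i j
    · exact Submodule.zero_mem _
  · rw [gPlus]; split
    · exact hN i hi j
    · rfl
  · rw [gPlus, if_neg]
    omega

lemma gMinus_props {𝒜 : ℕ → Submodule ℚ R} {F : ℤ → ℕ → R}
    (hFm : gmem 𝒜 F) (hF : isDP F) :
    gmem 𝒜 (gMinus F) ∧ isDM (gMinus F) ∧ isDP (gMinus F) := by
  obtain ⟨k, hk⟩ := hF
  refine ⟨fun i j => ?_, ⟨-1, fun i hi j => ?_⟩, ⟨k, fun i j hj => ?_⟩⟩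
  · rw [gMinus]; split
    · exact hFm i j
    · exact Submodule.zero_mem _
  · rw [gMinus, if_neg]; omega
  · rw [gMinus]; split
    · exact hk i j hj
    · rfl

end Main2

section Assoc
variable {R : Type*} [CommRing R] [Algebra ℚ R]

/-- Summand for `(F·G)·H` with indices `((u,l,p₂),(i,j,p))`. -/
def K1c (d : R → R) (F G H : ℤ → ℕ → R) (n : ℤ) (m : ℕ)
    (u l : ℤ) (p₂ : ℕ) (i j : ℤ) (p : ℕ) : R :=
  if n ≤ u + l ∧ p₂ + (u + l - n).toNat ≤ m ∧ u ≤ i + j ∧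
      p + (i + j - u).toNat ≤ p₂ then
    (zbinom u (u + l - n).toNat * zbinom i (i + j - u).toNat) •
      (F i p * (d^[(i + j - u).toNat] (G j (p₂ - p - (i + j - u).toNat)) *
        d^[(u + l - n).toNat] (H l (m - p₂ - (u + l - n).toNat))))
  else 0

def K1 (d : R → R) (F G H : ℤ → ℕ → R) (n : ℤ) (m : ℕ) :
    (ℤ × ℤ × ℕ) × (ℤ × ℤ × ℕ) → R := fun z =>
  K1c d F G H n m z.1.1 z.1.2.1 z.1.2.2 z.2.1 z.2.2.1 z.2.2.2

/-- Summand for `F·(G·H)` with indices `((i,v,p),(j,l,q),a)`. -/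
def K2c (d : R → R) (F G H : ℤ → ℕ → R) (n : ℤ) (m : ℕ)
    (i v : ℤ) (p : ℕ) (j l : ℤ) (q a : ℕ) : R :=
  if n ≤ i + v ∧ p + (i + v - n).toNat ≤ m ∧ v ≤ j + l ∧
      q + (j + l - v).toNat ≤ m - p - (i + v - n).toNat ∧
      a ≤ (i + v - n).toNat then
    (zbinom i (i + v - n).toNat * ((i + v - n).toNat.choose a : ℤ) *
        zbinom j (j + l - v).toNat) •
      (F i p * (d^[a] (G j q) *
        d^[(i + v - n).toNat - a + (j + l - v).toNat]
          (H l (m - p - (i + v - n).toNat - q - (j + l - v).toNat))))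
  else 0

def K2 (d : R → R) (F G H : ℤ → ℕ → R) (n : ℤ) (m : ℕ) :
    (ℤ × ℤ × ℕ) × (ℤ × ℤ × ℕ) × ℕ → R := fun z =>
  K2c d F G H n m z.1.1 z.1.2.1 z.1.2.2 z.2.1.1 z.2.1.2.1 z.2.1.2.2 z.2.2

/-- Normal form summand with indices `(i,j,l,p,q,a)`. -/
def NNc (d : R → R) (F G H : ℤ → ℕ → R) (n : ℤ) (m : ℕ)
    (i j l : ℤ) (p q a : ℕ) : R :=
  if n + a ≤ i + j + l ∧ p + q + a + (i + j + l - (n + a)).toNat ≤ m then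
    (zbinom i a * zbinom (i + j - a) (i + j + l - (n + a)).toNat) •
      (F i p * (d^[a] (G j q) *
        d^[(i + j + l - (n + a)).toNat]
          (H l (m - p - q - a - (i + j + l - (n + a)).toNat))))
  else 0

def NN (d : R → R) (F G H : ℤ → ℕ → R) (n : ℤ) (m : ℕ) :
    ℤ × ℤ × ℤ × ℕ × ℕ × ℕ → R := fun μ =>
  NNc d F G H n m μ.1 μ.2.1 μ.2.2.1 μ.2.2.2.1 μ.2.2.2.2.1 μ.2.2.2.2.2

/-- Fibered normal form with extra index `τ`. -/
def Pc (d : R → R) (F G H : ℤ → ℕ → R) (n : ℤ) (m : ℕ)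
    (i j l : ℤ) (p q a τ : ℕ) : R :=
  if n + a ≤ i + j + l ∧ p + q + a + (i + j + l - (n + a)).toNat ≤ m ∧
      τ ≤ (i + j + l - (n + a)).toNat then
    (zbinom i (a + (i + j + l - (n + a)).toNat - τ) *
        ((a + (i + j + l - (n + a)).toNat - τ).choose a : ℤ) * zbinom j τ) •
      (F i p * (d^[a] (G j q) *
        d^[(i + j + l - (n + a)).toNat]
          (H l (m - p - q - a - (i + j + l - (n + a)).toNat))))
  else 0

def PP (d : R → R) (F G H : ℤ → ℕ → R) (n : ℤ) (m : ℕ) :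
    (ℤ × ℤ × ℤ × ℕ × ℕ × ℕ) × ℕ → R := fun z =>
  Pc d F G H n m z.1.1 z.1.2.1 z.1.2.2.1 z.1.2.2.2.1 z.1.2.2.2.2.1
    z.1.2.2.2.2.2 z.2

variable (d : Derivation ℚ R R)

lemma K1c_ne_zero {F G H : ℤ → ℕ → R} {n : ℤ} {m : ℕ}
    {u l : ℤ} {p₂ : ℕ} {i j : ℤ} {p : ℕ}
    (h : K1c (⇑d) F G H n m u l p₂ i j p ≠ 0) :
    (n ≤ u + l ∧ p₂ + (u + l - n).toNat ≤ m ∧ u ≤ i + j ∧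
      p + (i + j - u).toNat ≤ p₂) ∧ F i p ≠ 0 ∧
      G j (p₂ - p - (i + j - u).toNat) ≠ 0 ∧
      H l (m - p₂ - (u + l - n).toNat) ≠ 0 := by
  rw [K1c] at h
  split at h
  · next hc =>
    refine ⟨hc, fun h1 => h ?_, fun h2 => h ?_, fun h3 => h ?_⟩
    · rw [h1, zero_mul, smul_zero]
    · rw [h2, dIter_zero, zero_mul, mul_zero, smul_zero]
    · rw [h3, dIter_zero, mul_zero, mul_zero, smul_zero]
  · exact absurd rfl h

lemma K2c_ne_zero {F G H : ℤ → ℕ → R} {n : ℤ} {m : ℕ}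
    {i v : ℤ} {p : ℕ} {j l : ℤ} {q a : ℕ}
    (h : K2c (⇑d) F G H n m i v p j l q a ≠ 0) :
    (n ≤ i + v ∧ p + (i + v - n).toNat ≤ m ∧ v ≤ j + l ∧
      q + (j + l - v).toNat ≤ m - p - (i + v - n).toNat ∧
      a ≤ (i + v - n).toNat) ∧ F i p ≠ 0 ∧ G j q ≠ 0 ∧
      H l (m - p - (i + v - n).toNat - q - (j + l - v).toNat) ≠ 0 := by
  rw [K2c] at h
  split at h
  · next hc =>
    refine ⟨hc, fun h1 => h ?_, fun h2 => h ?_, fun h3 => h ?_⟩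
    · rw [h1, zero_mul, smul_zero]
    · rw [h2, dIter_zero, zero_mul, mul_zero, smul_zero]
    · rw [h3, dIter_zero, mul_zero, mul_zero, smul_zero]
  · exact absurd rfl h

lemma Pc_ne_zero {F G H : ℤ → ℕ → R} {n : ℤ} {m : ℕ}
    {i j l : ℤ} {p q a τ : ℕ}
    (h : Pc (⇑d) F G H n m i j l p q a τ ≠ 0) :
    (n + a ≤ i + j + l ∧ p + q + a + (i + j + l - (n + a)).toNat ≤ m ∧
      τ ≤ (i + j + l - (n + a)).toNat) ∧ F i p ≠ 0 ∧ G j q ≠ 0 ∧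
      H l (m - p - q - a - (i + j + l - (n + a)).toNat) ≠ 0 := by
  rw [Pc] at h
  split at h
  · next hc =>
    refine ⟨hc, fun h1 => h ?_, fun h2 => h ?_, fun h3 => h ?_⟩
    · rw [h1, zero_mul, smul_zero]
    · rw [h2, dIter_zero, zero_mul, mul_zero, smul_zero]
    · rw [h3, dIter_zero, mul_zero, mul_zero, smul_zero]
  · exact absurd rfl h

variable {F G H : ℤ → ℕ → R} {k₁ k₂ k₃ : ℤ}

lemma support_K1_finite
    (hF : ∀ (i : ℤ) (j : ℕ), (j : ℤ) < k₁ - i → F i j = 0)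
    (hG : ∀ (i : ℤ) (j : ℕ), (j : ℤ) < k₂ - i → G i j = 0)
    (hH : ∀ (i : ℤ) (j : ℕ), (j : ℤ) < k₃ - i → H i j = 0)
    (n : ℤ) (m : ℕ) :
    (Function.support (K1 (⇑d) F G H n m)).Finite := by
  apply Set.Finite.subset (Set.finite_Icc
    (((k₁ + k₂ - 4 * m, k₃ - m, 0), (k₁ - m, k₂ - m, 0)) :
      (ℤ × ℤ × ℕ) × (ℤ × ℤ × ℕ))
    (((n + 2 * m - k₃, n + 4 * m - k₁ - k₂, m),
      (n + 4 * m - k₂ - k₃, n + 4 * m - k₁ - k₃, m))))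
  rintro ⟨⟨u, l, p₂⟩, i, j, p⟩ hz
  have hz' : K1c (⇑d) F G H n m u l p₂ i j p ≠ 0 := hz
  obtain ⟨hc, h1, h2, h3⟩ := K1c_ne_zero d hz'
  have e1 : ¬ ((p : ℤ) < k₁ - i) := fun hh => h1 (hF _ _ hh)
  have e2 : ¬ (((p₂ - p - (i + j - u).toNat : ℕ) : ℤ) < k₂ - j) :=
    fun hh => h2 (hG _ _ hh)
  have e3 : ¬ (((m - p₂ - (u + l - n).toNat : ℕ) : ℤ) < k₃ - l) :=
    fun hh => h3 (hH _ _ hh)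
  simp only [Set.mem_Icc, Prod.le_def]
  try dsimp only
  push_cast at e1 e2 e3 ⊢
  omega

lemma support_K2_finite
    (hF : ∀ (i : ℤ) (j : ℕ), (j : ℤ) < k₁ - i → F i j = 0)
    (hG : ∀ (i : ℤ) (j : ℕ), (j : ℤ) < k₂ - i → G i j = 0)
    (hH : ∀ (i : ℤ) (j : ℕ), (j : ℤ) < k₃ - i → H i j = 0)
    (n : ℤ) (m : ℕ) :
    (Function.support (K2 (⇑d) F G H n m)).Finite := by
  apply Set.Finite.subset (Set.finite_Icc
    (((k₁ - m, k₂ + k₃ - 4 * m, 0), ((k₂ - m, k₃ - m, 0), 0)) :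
      (ℤ × ℤ × ℕ) × (ℤ × ℤ × ℕ) × ℕ)
    (((n + 4 * m - k₂ - k₃, n + 3 * m - k₁, m),
      ((n + 4 * m - k₁ - k₃, n + 4 * m - k₁ - k₂, m), m))))
  rintro ⟨⟨i, v, p⟩, ⟨j, l, q⟩, a⟩ hz
  have hz' : K2c (⇑d) F G H n m i v p j l q a ≠ 0 := hz
  obtain ⟨hc, h1, h2, h3⟩ := K2c_ne_zero d hz'
  have e1 : ¬ ((p : ℤ) < k₁ - i) := fun hh => h1 (hF _ _ hh)
  have e2 : ¬ ((q : ℤ) < k₂ - j) := fun hh => h2 (hG _ _ hh)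
  have e3 : ¬ (((m - p - (i + v - n).toNat - q - (j + l - v).toNat : ℕ) : ℤ)
      < k₃ - l) := fun hh => h3 (hH _ _ hh)
  simp only [Set.mem_Icc, Prod.le_def]
  try dsimp only
  push_cast at e1 e2 e3 ⊢
  omega

lemma support_PP_finite
    (hF : ∀ (i : ℤ) (j : ℕ), (j : ℤ) < k₁ - i → F i j = 0)
    (hG : ∀ (i : ℤ) (j : ℕ), (j : ℤ) < k₂ - i → G i j = 0)
    (hH : ∀ (i : ℤ) (j : ℕ), (j : ℤ) < k₃ - i → H i j = 0)
    (n : ℤ) (m : ℕ) :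
    (Function.support (PP (⇑d) F G H n m)).Finite := by
  apply Set.Finite.subset (Set.finite_Icc
    (((k₁ - m, k₂ - m, k₃ - m, 0, 0, 0), 0) :
      (ℤ × ℤ × ℤ × ℕ × ℕ × ℕ) × ℕ)
    (((n + 4 * m - k₂ - k₃, n + 4 * m - k₁ - k₃, n + 4 * m - k₁ - k₂,
      m, m, m), 2 * m)))
  rintro ⟨⟨i, j, l, p, q, a⟩, τ⟩ hz
  have hz' : Pc (⇑d) F G H n m i j l p q a τ ≠ 0 := hz
  obtain ⟨hc, h1, h2, h3⟩ := Pc_ne_zero d hz'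
  have e1 : ¬ ((p : ℤ) < k₁ - i) := fun hh => h1 (hF _ _ hh)
  have e2 : ¬ ((q : ℤ) < k₂ - j) := fun hh => h2 (hG _ _ hh)
  have e3 : ¬ (((m - p - q - a - (i + j + l - (n + a)).toNat : ℕ) : ℤ)
      < k₃ - l) := fun hh => h3 (hH _ _ hh)
  simp only [Set.mem_Icc, Prod.le_def]
  try dsimp only
  push_cast at e1 e2 e3 ⊢
  omega

end Assoc

section ClaimA
variable {R : Type*} [CommRing R] [Algebra ℚ R] (d : Derivation ℚ R R)
variable {F G H : ℤ → ℕ → R} {k₁ k₂ k₃ : ℤ}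

lemma dIter_finsum {α : Type*} (k : ℕ) (f : α → R)
    (hf : (Function.support f).Finite) :
    (⇑d)^[k] (∑ᶠ x, f x) = ∑ᶠ x, (⇑d)^[k] (f x) := by
  calc (⇑d)^[k] (∑ᶠ x, f x)
      = ((d.toLinearMap ^ k : R →ₗ[ℚ] R) : R →+ R) (∑ᶠ x, f x) := dIter_apply d k _
    _ = ∑ᶠ x, ((d.toLinearMap ^ k : R →ₗ[ℚ] R) : R →+ R) (f x) :=
        AddMonoidHom.map_finsum _ hf
    _ = ∑ᶠ x, (⇑d)^[k] (f x) := finsum_congr fun x => (dIter_apply d k _).symm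

lemma gTerm_FGH_left
    (hF : ∀ (i : ℤ) (j : ℕ), (j : ℤ) < k₁ - i → F i j = 0)
    (hG : ∀ (i : ℤ) (j : ℕ), (j : ℤ) < k₂ - i → G i j = 0)
    (n : ℤ) (m : ℕ) (x : ℤ × ℤ × ℕ) :
    gTerm (⇑d) (gMul (⇑d) F G) H n m x =
      ∑ᶠ y : ℤ × ℤ × ℕ, K1 (⇑d) F G H n m (x, y) := by
  obtain ⟨u, l, p₂⟩ := x
  by_cases hc : n ≤ u + l ∧ p₂ + (u + l - n).toNat ≤ m
  · show (if n ≤ u + l ∧ p₂ + (u + l - n).toNat ≤ m then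
        zbinom u (u + l - n).toNat •
          (gMul (⇑d) F G u p₂ *
            (⇑d)^[(u + l - n).toNat] (H l (m - p₂ - (u + l - n).toNat)))
      else 0) = _
    have hfin2 : (Function.support (fun y => gTerm (⇑d) F G u p₂ y *
        (⇑d)^[(u + l - n).toNat] (H l (m - p₂ - (u + l - n).toNat)))).Finite := by
      apply Set.Finite.subset (support_gTerm_finite d hF hG u p₂)
      intro y hy
      simp only [Function.mem_support] at hy ⊢
      intro h0
      exact hy (by rw [h0, zero_mul])
    rw [if_pos hc, gMul,
      finsum_mul' _ _ (support_gTerm_finite d hF hG u p₂),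
      smul_finsum' (M := R) (zbinom u (u + l - n).toNat) hfin2]
    apply finsum_congr
    rintro ⟨i, j, p⟩
    by_cases hc2 : u ≤ i + j ∧ p + (i + j - u).toNat ≤ p₂
    · show zbinom u (u + l - n).toNat •
          ((if u ≤ i + j ∧ p + (i + j - u).toNat ≤ p₂ then
              zbinom i (i + j - u).toNat •
                (F i p * (⇑d)^[(i + j - u).toNat]
                  (G j (p₂ - p - (i + j - u).toNat)))
            else 0) *
            (⇑d)^[(u + l - n).toNat] (H l (m - p₂ - (u + l - n).toNat))) =
          K1c (⇑d) F G H n m u l p₂ i j p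
    -- unfold
      rw [if_pos hc2, K1c, if_pos ⟨hc.1, hc.2, hc2.1, hc2.2⟩]
      rw [smul_mul_assoc, smul_smul, mul_assoc]
    · show zbinom u (u + l - n).toNat •
          ((if u ≤ i + j ∧ p + (i + j - u).toNat ≤ p₂ then
              zbinom i (i + j - u).toNat •
                (F i p * (⇑d)^[(i + j - u).toNat]
                  (G j (p₂ - p - (i + j - u).toNat)))
            else 0) *
            (⇑d)^[(u + l - n).toNat] (H l (m - p₂ - (u + l - n).toNat))) =
          K1c (⇑d) F G H n m u l p₂ i j p
      rw [if_neg hc2, K1c, if_neg (fun hk => hc2 ⟨hk.2.2.1, hk.2.2.2⟩),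
        zero_mul, smul_zero]
  · show (if n ≤ u + l ∧ p₂ + (u + l - n).toNat ≤ m then
        zbinom u (u + l - n).toNat •
          (gMul (⇑d) F G u p₂ *
            (⇑d)^[(u + l - n).toNat] (H l (m - p₂ - (u + l - n).toNat)))
      else 0) = _
    rw [if_neg hc]
    symm
    apply finsum_eq_zero_of_forall_eq_zero
    rintro ⟨i, j, p⟩
    show K1c (⇑d) F G H n m u l p₂ i j p = 0
    rw [K1c, if_neg (fun hk => hc ⟨hk.1, hk.2.1⟩)]

lemma claimA
    (hF : ∀ (i : ℤ) (j : ℕ), (j : ℤ) < k₁ - i → F i j = 0)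
    (hG : ∀ (i : ℤ) (j : ℕ), (j : ℤ) < k₂ - i → G i j = 0)
    (hH : ∀ (i : ℤ) (j : ℕ), (j : ℤ) < k₃ - i → H i j = 0)
    (n : ℤ) (m : ℕ) :
    gMul (⇑d) (gMul (⇑d) F G) H n m = ∑ᶠ z, K1 (⇑d) F G H n m z := by
  rw [gMul, finsum_congr (gTerm_FGH_left d hF hG n m)]
  exact (finsum_curry _ (support_K1_finite d hF hG hH n m)).symm

end ClaimA

section ClaimB
variable {R : Type*} [CommRing R] [Algebra ℚ R]

def K2E (d : R → R) (G H : ℤ → ℕ → R) (v : ℤ) (M : ℕ) (σ : ℕ)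
    (y : ℤ × ℤ × ℕ) (a : ℕ) : R :=
  if (v ≤ y.1 + y.2.1 ∧ y.2.2 + (y.1 + y.2.1 - v).toNat ≤ M) ∧ a ≤ σ then
    (zbinom y.1 (y.1 + y.2.1 - v).toNat * (σ.choose a : ℤ)) •
      (d^[a] (G y.1 y.2.2) *
        d^[σ - a + (y.1 + y.2.1 - v).toNat]
          (H y.2.1 (M - y.2.2 - (y.1 + y.2.1 - v).toNat)))
  else 0

variable (d : Derivation ℚ R R) {F G H : ℤ → ℕ → R} {k₁ k₂ k₃ : ℤ}

lemma dIter_gTerm (σ : ℕ) (v : ℤ) (M : ℕ) (y : ℤ × ℤ × ℕ) :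
    (⇑d)^[σ] (gTerm (⇑d) G H v M y) = ∑ᶠ a : ℕ, K2E (⇑d) G H v M σ y a := by
  obtain ⟨j, l, q⟩ := y
  by_cases hc : v ≤ j + l ∧ q + (j + l - v).toNat ≤ M
  · show (⇑d)^[σ] (if v ≤ j + l ∧ q + (j + l - v).toNat ≤ M then
        zbinom j (j + l - v).toNat •
          (G j q * (⇑d)^[(j + l - v).toNat] (H l (M - q - (j + l - v).toNat)))
      else 0) = _
    rw [if_pos hc, dIter_zsmul, dIter_mul,
      Finset.Nat.sum_antidiagonal_eq_sum_range_succ_mk]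
    have hRHS : (∑ᶠ a : ℕ, K2E (⇑d) G H v M σ (j, l, q) a) =
        ∑ a ∈ Finset.range (σ + 1), K2E (⇑d) G H v M σ (j, l, q) a := by
      apply finsum_eq_finset_sum_of_support_subset
      intro a ha
      simp only [Function.mem_support] at ha
      simp only [Finset.coe_range, Set.mem_Iio, Nat.lt_succ_iff]
      by_contra hle
      exact ha (by rw [K2E, if_neg (fun hk => hle hk.2)])
    rw [hRHS, Finset.smul_sum]
    apply Finset.sum_congr rfl
    intro a ha
    have haσ : a ≤ σ := by
      simp only [Finset.mem_range, Nat.lt_succ_iff] at ha; exact ha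
    rw [K2E, if_pos ⟨hc, haσ⟩, ← Function.iterate_add_apply,
      ← natCast_zsmul, smul_smul]
  · show (⇑d)^[σ] (if v ≤ j + l ∧ q + (j + l - v).toNat ≤ M then
        zbinom j (j + l - v).toNat •
          (G j q * (⇑d)^[(j + l - v).toNat] (H l (M - q - (j + l - v).toNat)))
      else 0) = _
    rw [if_neg hc, dIter_zero]
    symm
    apply finsum_eq_zero_of_forall_eq_zero
    intro a
    rw [K2E, if_neg (fun hk => hc hk.1)]

lemma support_slice_finite {α β M : Type*} [Zero M] {f : α × β → M}
    (hf : (Function.support f).Finite) (x : α) :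
    (Function.support fun w => f (x, w)).Finite := by
  have h : (Function.support fun w => f (x, w)) ⊆
      Prod.mk x ⁻¹' (Function.support f) := fun w hw => hw
  refine Set.Finite.subset (hf.preimage ?_) h
  apply Set.injOn_of_injective
  intro a b hab
  simpa using congrArg Prod.snd hab

lemma gTerm_FGH_right
    (hG : ∀ (i : ℤ) (j : ℕ), (j : ℤ) < k₂ - i → G i j = 0)
    (hH : ∀ (i : ℤ) (j : ℕ), (j : ℤ) < k₃ - i → H i j = 0)
    (n : ℤ) (m : ℕ) (x : ℤ × ℤ × ℕ) :
    gTerm (⇑d) F (gMul (⇑d) G H) n m x =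
      ∑ᶠ y : ℤ × ℤ × ℕ, ∑ᶠ a : ℕ, K2 (⇑d) F G H n m (x, y, a) := by
  obtain ⟨i, v, p⟩ := x
  by_cases hc : n ≤ i + v ∧ p + (i + v - n).toNat ≤ m
  · show (if n ≤ i + v ∧ p + (i + v - n).toNat ≤ m then
        zbinom i (i + v - n).toNat •
          (F i p * (⇑d)^[(i + v - n).toNat]
            (gMul (⇑d) G H v (m - p - (i + v - n).toNat)))
      else 0) = _
    rw [if_pos hc, gMul,
      dIter_finsum d _ _ (support_gTerm_finite d hG hH v (m - p - (i + v - n).toNat)),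
      finsum_congr (dIter_gTerm d ((i + v - n).toNat) v (m - p - (i + v - n).toNat))]
    have hfinY : (Function.support fun y => ∑ᶠ a : ℕ,
        K2E (⇑d) G H v (m - p - (i + v - n).toNat) ((i + v - n).toNat) y a).Finite := by
      apply Set.Finite.subset
        (support_gTerm_finite d hG hH v (m - p - (i + v - n).toNat))
      intro y hy
      simp only [Function.mem_support] at hy ⊢
      intro h0
      exact hy (by rw [← dIter_gTerm d, h0, dIter_zero])
    have hfinA : ∀ y : ℤ × ℤ × ℕ, (Function.support fun a : ℕ =>
        K2E (⇑d) G H v (m - p - (i + v - n).toNat) ((i + v - n).toNat) y a).Finite := by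
      intro y
      apply Set.Finite.subset (Set.finite_Iic ((i + v - n).toNat))
      intro a ha
      simp only [Function.mem_support] at ha
      simp only [Set.mem_Iic]
      by_contra hle
      exact ha (by rw [K2E, if_neg (fun hk => hle hk.2)])
    rw [mul_finsum' _ _ hfinY, smul_finsum' (M := R) (zbinom i (i + v - n).toNat)
      (by
        apply Set.Finite.subset hfinY
        intro y hy
        simp only [Function.mem_support] at hy ⊢
        intro h0
        exact hy (by rw [h0, mul_zero]))]
    apply finsum_congr
    rintro ⟨j, l, q⟩
    rw [mul_finsum' _ _ (hfinA (j, l, q)), smul_finsum' (M := R)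
      (zbinom i (i + v - n).toNat)
      (by
        apply Set.Finite.subset (hfinA (j, l, q))
        intro a ha
        simp only [Function.mem_support] at ha ⊢
        intro h0
        exact ha (by rw [h0, mul_zero]))]
    apply finsum_congr
    intro a
    by_cases hc2 : (v ≤ j + l ∧ q + (j + l - v).toNat ≤ m - p - (i + v - n).toNat)
        ∧ a ≤ (i + v - n).toNat
    · show zbinom i (i + v - n).toNat •
          (F i p * K2E (⇑d) G H v (m - p - (i + v - n).toNat)
            ((i + v - n).toNat) (j, l, q) a) =
          K2c (⇑d) F G H n m i v p j l q a
      rw [K2E, if_pos hc2, K2c,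
        if_pos ⟨hc.1, hc.2, hc2.1.1, hc2.1.2, hc2.2⟩,
        mul_smul_comm, smul_smul]
      congr 1
      ring
    · show zbinom i (i + v - n).toNat •
          (F i p * K2E (⇑d) G H v (m - p - (i + v - n).toNat)
            ((i + v - n).toNat) (j, l, q) a) =
          K2c (⇑d) F G H n m i v p j l q a
      rw [K2E, if_neg hc2, K2c,
        if_neg (fun hk => hc2 ⟨⟨hk.2.2.1, hk.2.2.2.1⟩, hk.2.2.2.2⟩),
        mul_zero, smul_zero]
  · show (if n ≤ i + v ∧ p + (i + v - n).toNat ≤ m then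
        zbinom i (i + v - n).toNat •
          (F i p * (⇑d)^[(i + v - n).toNat]
            (gMul (⇑d) G H v (m - p - (i + v - n).toNat)))
      else 0) = _
    rw [if_neg hc]
    symm
    apply finsum_eq_zero_of_forall_eq_zero
    rintro ⟨j, l, q⟩
    apply finsum_eq_zero_of_forall_eq_zero
    intro a
    show K2c (⇑d) F G H n m i v p j l q a = 0
    rw [K2c, if_neg (fun hk => hc ⟨hk.1, hk.2.1⟩)]

lemma claimB
    (hF : ∀ (i : ℤ) (j : ℕ), (j : ℤ) < k₁ - i → F i j = 0)
    (hG : ∀ (i : ℤ) (j : ℕ), (j : ℤ) < k₂ - i → G i j = 0)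
    (hH : ∀ (i : ℤ) (j : ℕ), (j : ℤ) < k₃ - i → H i j = 0)
    (n : ℤ) (m : ℕ) :
    gMul (⇑d) F (gMul (⇑d) G H) n m = ∑ᶠ z, K2 (⇑d) F G H n m z := by
  rw [gMul, finsum_congr (gTerm_FGH_right d hG hH n m)]
  have hfin := support_K2_finite d hF hG hH n m
  exact ((finsum_curry _ hfin).trans
    (finsum_congr fun x => finsum_curry _ (support_slice_finite hfin x))).symm

end ClaimB

section ClaimCD
variable {R : Type*} [CommRing R] [Algebra ℚ R]

lemma finsum_mem_of_vanishing {M α : Type*} [AddCommMonoid M]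
    (f : α → M) (s : Set α) (h : ∀ x, x ∉ s → f x = 0) :
    (∑ᶠ x ∈ s, f x) = ∑ᶠ x, f x := by
  rw [finsum_mem_def]
  apply finsum_congr
  intro x
  by_cases hx : x ∈ s
  · exact Set.indicator_of_mem hx f
  · rw [Set.indicator_of_notMem hx, h x hx]

def sK1 (n : ℤ) (m : ℕ) : Set ((ℤ × ℤ × ℕ) × (ℤ × ℤ × ℕ)) :=
  {z | n ≤ z.1.1 + z.1.2.1 ∧ z.1.2.2 + (z.1.1 + z.1.2.1 - n).toNat ≤ m ∧
    z.1.1 ≤ z.2.1 + z.2.2.1 ∧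
    z.2.2.2 + (z.2.1 + z.2.2.1 - z.1.1).toNat ≤ z.1.2.2}

def sNN (n : ℤ) (m : ℕ) : Set (ℤ × ℤ × ℤ × ℕ × ℕ × ℕ) :=
  {μ | n + μ.2.2.2.2.2 ≤ μ.1 + μ.2.1 + μ.2.2.1 ∧
    μ.2.2.2.1 + μ.2.2.2.2.1 + μ.2.2.2.2.2 +
      (μ.1 + μ.2.1 + μ.2.2.1 - (n + μ.2.2.2.2.2)).toNat ≤ m}

def sK2 (n : ℤ) (m : ℕ) : Set ((ℤ × ℤ × ℕ) × (ℤ × ℤ × ℕ) × ℕ) :=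
  {z | n ≤ z.1.1 + z.1.2.1 ∧ z.1.2.2 + (z.1.1 + z.1.2.1 - n).toNat ≤ m ∧
    z.1.2.1 ≤ z.2.1.1 + z.2.1.2.1 ∧
    z.2.1.2.2 + (z.2.1.1 + z.2.1.2.1 - z.1.2.1).toNat ≤
      m - z.1.2.2 - (z.1.1 + z.1.2.1 - n).toNat ∧
    z.2.2 ≤ (z.1.1 + z.1.2.1 - n).toNat}

def sPP (n : ℤ) (m : ℕ) : Set ((ℤ × ℤ × ℤ × ℕ × ℕ × ℕ) × ℕ) :=
  {w | n + w.1.2.2.2.2.2 ≤ w.1.1 + w.1.2.1 + w.1.2.2.1 ∧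
    w.1.2.2.2.1 + w.1.2.2.2.2.1 + w.1.2.2.2.2.2 +
      (w.1.1 + w.1.2.1 + w.1.2.2.1 - (n + w.1.2.2.2.2.2)).toNat ≤ m ∧
    w.2 ≤ (w.1.1 + w.1.2.1 + w.1.2.2.1 - (n + w.1.2.2.2.2.2)).toNat}

variable (d : Derivation ℚ R R) {F G H : ℤ → ℕ → R}

lemma claimC (n : ℤ) (m : ℕ) :
    ∑ᶠ z, K1 (⇑d) F G H n m z = ∑ᶠ μ, NN (⇑d) F G H n m μ := by
  have hvan1 : ∀ z, z ∉ sK1 n m → K1 (⇑d) F G H n m z = 0 := by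
    rintro ⟨⟨u, l, p₂⟩, i, j, p⟩ hz
    show K1c (⇑d) F G H n m u l p₂ i j p = 0
    rw [K1c, if_neg]
    exact fun hk => hz ⟨hk.1, hk.2.1, hk.2.2.1, hk.2.2.2⟩
  have hvan2 : ∀ μ, μ ∉ sNN n m → NN (⇑d) F G H n m μ = 0 := by
    rintro ⟨i, j, l, p, q, a⟩ hμ
    show NNc (⇑d) F G H n m i j l p q a = 0
    rw [NNc, if_neg]
    exact fun hk => hμ ⟨hk.1, hk.2⟩
  rw [← finsum_mem_of_vanishing _ _ hvan1, ← finsum_mem_of_vanishing _ _ hvan2]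
  apply finsum_mem_eq_of_bijOn
    (fun z => (z.2.1, z.2.2.1, z.1.2.1, z.2.2.2,
      z.1.2.2 - z.2.2.2 - (z.2.1 + z.2.2.1 - z.1.1).toNat,
      (z.2.1 + z.2.2.1 - z.1.1).toNat))
  · refine ⟨?_, ?_, ?_⟩
    · rintro ⟨⟨u, l, p₂⟩, i, j, p⟩ hz
      have h1 : n ≤ u + l := hz.1
      have h2 : p₂ + (u + l - n).toNat ≤ m := hz.2.1
      have h3 : u ≤ i + j := hz.2.2.1
      have h4 : p + (i + j - u).toNat ≤ p₂ := hz.2.2.2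
      show n + (i + j - u).toNat ≤ i + j + l ∧
        p + (p₂ - p - (i + j - u).toNat) + (i + j - u).toNat +
          (i + j + l - (n + (i + j - u).toNat)).toNat ≤ m
      omega
    · rintro ⟨⟨u, l, p₂⟩, i, j, p⟩ hz ⟨⟨u', l', p₂'⟩, i', j', p'⟩ hz' heq
      have h3 : u ≤ i + j := hz.2.2.1
      have h4 : p + (i + j - u).toNat ≤ p₂ := hz.2.2.2
      have h3' : u' ≤ i' + j' := hz'.2.2.1
      have h4' : p' + (i' + j' - u').toNat ≤ p₂' := hz'.2.2.2
      simp only [Prod.mk.injEq] at heq ⊢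
      obtain ⟨e1, e2, e3, e4, e5, e6⟩ := heq
      refine ⟨⟨?_, ?_, ?_⟩, ?_, ?_, ?_⟩ <;> omega
    · rintro ⟨i, j, l, p, q, a⟩ hμ
      have h1 : n + a ≤ i + j + l := hμ.1
      have h2 : p + q + a + (i + j + l - (n + a)).toNat ≤ m := hμ.2
      refine ⟨((i + j - a, l, p + q + a), (i, j, p)), ?_, ?_⟩
      · show n ≤ (i + j - a) + l ∧
          (p + q + a) + ((i + j - a) + l - n).toNat ≤ m ∧
          (i + j - a) ≤ i + j ∧
          p + (i + j - (i + j - a)).toNat ≤ p + q + a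
        omega
      · simp only [Prod.mk.injEq, true_and, and_true]
        omega
  · rintro ⟨⟨u, l, p₂⟩, i, j, p⟩ hz
    have h1 : n ≤ u + l := hz.1
    have h2 : p₂ + (u + l - n).toNat ≤ m := hz.2.1
    have h3 : u ≤ i + j := hz.2.2.1
    have h4 : p + (i + j - u).toNat ≤ p₂ := hz.2.2.2
    show K1c (⇑d) F G H n m u l p₂ i j p =
      NNc (⇑d) F G H n m i j l p (p₂ - p - (i + j - u).toNat) ((i + j - u).toNat)
    have hu : i + j - ((i + j - u).toNat : ℤ) = u := by omega
    have hb : (i + j + l - (n + (i + j - u).toNat)).toNat = (u + l - n).toNat := by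
      omega
    have hq : p + (p₂ - p - (i + j - u).toNat) + (i + j - u).toNat = p₂ := by omega
    have hHa : m - p - (p₂ - p - (i + j - u).toNat) - (i + j - u).toNat -
        (u + l - n).toNat = m - p₂ - (u + l - n).toNat := by omega
    rw [K1c, if_pos ⟨h1, h2, h3, h4⟩, NNc, hu, hb, hq, hHa,
      if_pos ⟨by omega, by omega⟩, mul_comm (zbinom i ((i + j - u).toNat))]

lemma claimD1 (n : ℤ) (m : ℕ) :
    ∑ᶠ z, K2 (⇑d) F G H n m z = ∑ᶠ w, PP (⇑d) F G H n m w := by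
  have hvan1 : ∀ z, z ∉ sK2 n m → K2 (⇑d) F G H n m z = 0 := by
    rintro ⟨⟨i, v, p⟩, ⟨j, l, q⟩, a⟩ hz
    show K2c (⇑d) F G H n m i v p j l q a = 0
    rw [K2c, if_neg]
    exact fun hk => hz ⟨hk.1, hk.2.1, hk.2.2.1, hk.2.2.2.1, hk.2.2.2.2⟩
  have hvan2 : ∀ w, w ∉ sPP n m → PP (⇑d) F G H n m w = 0 := by
    rintro ⟨⟨i, j, l, p, q, a⟩, τ⟩ hw
    show Pc (⇑d) F G H n m i j l p q a τ = 0
    rw [Pc, if_neg]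
    exact fun hk => hw ⟨hk.1, hk.2.1, hk.2.2⟩
  rw [← finsum_mem_of_vanishing _ _ hvan1, ← finsum_mem_of_vanishing _ _ hvan2]
  apply finsum_mem_eq_of_bijOn
    (fun z => ((z.1.1, z.2.1.1, z.2.1.2.1, z.1.2.2, z.2.1.2.2, z.2.2),
      (z.2.1.1 + z.2.1.2.1 - z.1.2.1).toNat))
  · refine ⟨?_, ?_, ?_⟩
    · rintro ⟨⟨i, v, p⟩, ⟨j, l, q⟩, a⟩ hz
      have h1 : n ≤ i + v := hz.1
      have h2 : p + (i + v - n).toNat ≤ m := hz.2.1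
      have h3 : v ≤ j + l := hz.2.2.1
      have h4 : q + (j + l - v).toNat ≤ m - p - (i + v - n).toNat := hz.2.2.2.1
      have h5 : a ≤ (i + v - n).toNat := hz.2.2.2.2
      show n + a ≤ i + j + l ∧
        p + q + a + (i + j + l - (n + a)).toNat ≤ m ∧
        (j + l - v).toNat ≤ (i + j + l - (n + a)).toNat
      omega
    · rintro ⟨⟨i, v, p⟩, ⟨j, l, q⟩, a⟩ hz ⟨⟨i', v', p'⟩, ⟨j', l', q'⟩, a'⟩ hz' heq
      have h3 : v ≤ j + l := hz.2.2.1
      have h3' : v' ≤ j' + l' := hz'.2.2.1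
      simp only [Prod.mk.injEq] at heq ⊢
      obtain ⟨⟨e1, e2, e3, e4, e5, e6⟩, e7⟩ := heq
      refine ⟨⟨?_, ?_, ?_⟩, ⟨?_, ?_, ?_⟩, ?_⟩ <;> omega
    · rintro ⟨⟨i, j, l, p, q, a⟩, τ⟩ hw
      have h1 : n + a ≤ i + j + l := hw.1
      have h2 : p + q + a + (i + j + l - (n + a)).toNat ≤ m := hw.2.1
      have h3 : τ ≤ (i + j + l - (n + a)).toNat := hw.2.2
      refine ⟨((i, j + l - τ, p), (j, l, q), a), ?_, ?_⟩
      · show n ≤ i + (j + l - τ) ∧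
          p + (i + (j + l - τ) - n).toNat ≤ m ∧
          (j + l - τ) ≤ j + l ∧
          q + (j + l - (j + l - τ)).toNat ≤
            m - p - (i + (j + l - τ) - n).toNat ∧
          a ≤ (i + (j + l - τ) - n).toNat
        omega
      · simp only [Prod.mk.injEq, true_and, and_true]
        omega
  · rintro ⟨⟨i, v, p⟩, ⟨j, l, q⟩, a⟩ hz
    have h1 : n ≤ i + v := hz.1
    have h2 : p + (i + v - n).toNat ≤ m := hz.2.1
    have h3 : v ≤ j + l := hz.2.2.1
    have h4 : q + (j + l - v).toNat ≤ m - p - (i + v - n).toNat := hz.2.2.2.1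
    have h5 : a ≤ (i + v - n).toNat := hz.2.2.2.2
    show K2c (⇑d) F G H n m i v p j l q a =
      Pc (⇑d) F G H n m i j l p q a ((j + l - v).toNat)
    have hσ : a + (i + j + l - (n + a)).toNat - (j + l - v).toNat =
        (i + v - n).toNat := by omega
    have hHa : m - p - q - a - (i + j + l - (n + a)).toNat =
        m - p - (i + v - n).toNat - q - (j + l - v).toNat := by omega
    have hb : (i + j + l - (n + a)).toNat =
        (i + v - n).toNat - a + (j + l - v).toNat := by omega
    rw [K2c, if_pos ⟨h1, h2, h3, h4, h5⟩, Pc, hσ, hHa, hb,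
      if_pos ⟨by omega, by omega, by omega⟩]

lemma claimD2 {k₁ k₂ k₃ : ℤ}
    (hF : ∀ (i : ℤ) (j : ℕ), (j : ℤ) < k₁ - i → F i j = 0)
    (hG : ∀ (i : ℤ) (j : ℕ), (j : ℤ) < k₂ - i → G i j = 0)
    (hH : ∀ (i : ℤ) (j : ℕ), (j : ℤ) < k₃ - i → H i j = 0)
    (n : ℤ) (m : ℕ) :
    ∑ᶠ w, PP (⇑d) F G H n m w = ∑ᶠ μ, NN (⇑d) F G H n m μ := by
  rw [finsum_curry _ (support_PP_finite d hF hG hH n m)]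
  apply finsum_congr
  rintro ⟨i, j, l, p, q, a⟩
  show (∑ᶠ τ : ℕ, Pc (⇑d) F G H n m i j l p q a τ) =
    NNc (⇑d) F G H n m i j l p q a
  by_cases hc : n + a ≤ i + j + l ∧
      p + q + a + (i + j + l - (n + a)).toNat ≤ m
  · have hfs : (∑ᶠ τ : ℕ, Pc (⇑d) F G H n m i j l p q a τ) =
        ∑ τ ∈ Finset.range ((i + j + l - (n + a)).toNat + 1),
          Pc (⇑d) F G H n m i j l p q a τ := by
      apply finsum_eq_finset_sum_of_support_subset
      intro τ hτ
      simp only [Function.mem_support] at hτ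
      simp only [Finset.coe_range, Set.mem_Iio, Nat.lt_succ_iff]
      by_contra hle
      exact hτ (by rw [Pc, if_neg (fun hk => hle hk.2.2)])
    rw [hfs, NNc, if_pos hc]
    have hsum : ∀ τ ∈ Finset.range ((i + j + l - (n + a)).toNat + 1),
        Pc (⇑d) F G H n m i j l p q a τ =
        (zbinom i (a + (i + j + l - (n + a)).toNat - τ) *
          ((a + (i + j + l - (n + a)).toNat - τ).choose a : ℤ) *
          zbinom j τ) •
        (F i p * ((⇑d)^[a] (G j q) *
          (⇑d)^[(i + j + l - (n + a)).toNat]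
            (H l (m - p - q - a - (i + j + l - (n + a)).toNat)))) := by
      intro τ hτ
      simp only [Finset.mem_range, Nat.lt_succ_iff] at hτ
      rw [Pc, if_pos ⟨hc.1, hc.2, hτ⟩]
    rw [Finset.sum_congr rfl hsum, ← Finset.sum_smul, ← zbinom_key]
  · rw [NNc, if_neg hc]
    apply finsum_eq_zero_of_forall_eq_zero
    intro τ
    rw [Pc, if_neg (fun hk => hc ⟨hk.1, hk.2.1⟩)]

end ClaimCD

lemma gMul_assoc {R : Type*} [CommRing R] [Algebra ℚ R] (d : Derivation ℚ R R)
    {F G H : ℤ → ℕ → R} (hF : isDP F) (hG : isDP G) (hH : isDP H) :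
    gMul (⇑d) (gMul (⇑d) F G) H = gMul (⇑d) F (gMul (⇑d) G H) := by
  obtain ⟨k₁, hk₁⟩ := hF; obtain ⟨k₂, hk₂⟩ := hG; obtain ⟨k₃, hk₃⟩ := hH
  funext n m
  rw [claimA d hk₁ hk₂ hk₃ n m, claimB d hk₁ hk₂ hk₃ n m, claimC d n m,
    claimD1 d n m, claimD2 d hk₁ hk₂ hk₃ n m]

theorem stmt_1 {R : Type*} [CommRing R] [Algebra ℚ R]
    (𝒜 : ℕ → Submodule ℚ R) (d : Derivation ℚ R R)
    (hgmul : ∀ (i j : ℕ) (a b : R), a ∈ 𝒜 i → b ∈ 𝒜 j → a * b ∈ 𝒜 (i + j))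
    (hgder : ∀ (i : ℕ) (a : R), a ∈ 𝒜 i → d a ∈ 𝒜 (i + 1))
    (hgone : (1 : R) ∈ 𝒜 0) :
    -- the product of two elements of D⁺ is well defined: each graded
    -- component of each coefficient is a (convergent, indeed finite) sum
    (∀ F G : ℤ → ℕ → R, gmem 𝒜 F → gmem 𝒜 G → isDP F → isDP G →
      ∀ (n : ℤ) (m : ℕ), (Function.support (gTerm (⇑d) F G n m)).Finite) ∧
    -- and the product again lies in D⁺
    (∀ F G : ℤ → ℕ → R, gmem 𝒜 F → gmem 𝒜 G → isDP F → isDP G →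
      gmem 𝒜 (gMul (⇑d) F G) ∧ isDP (gMul (⇑d) F G)) ∧
    -- with this product D⁺ is a unital associative algebra:
    -- associativity,
    (∀ F G H : ℤ → ℕ → R, gmem 𝒜 F → gmem 𝒜 G → gmem 𝒜 H →
      isDP F → isDP G → isDP H →
      gMul (⇑d) (gMul (⇑d) F G) H = gMul (⇑d) F (gMul (⇑d) G H)) ∧
    -- bilinearity,
    (∀ F G H : ℤ → ℕ → R, gmem 𝒜 F → gmem 𝒜 G → gmem 𝒜 H →
      isDP F → isDP G → isDP H →
      gMul (⇑d) F (G + H) = gMul (⇑d) F G + gMul (⇑d) F H ∧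
      gMul (⇑d) (F + G) H = gMul (⇑d) F H + gMul (⇑d) G H) ∧
    (∀ (c : ℚ) (F G : ℤ → ℕ → R), gmem 𝒜 F → gmem 𝒜 G → isDP F → isDP G →
      gMul (⇑d) (c • F) G = c • gMul (⇑d) F G ∧
      gMul (⇑d) F (c • G) = c • gMul (⇑d) F G) ∧
    -- and unitality;
    (∀ F : ℤ → ℕ → R, gmem 𝒜 F → isDP F →
      gMul (⇑d) gOne F = F ∧ gMul (⇑d) F gOne = F) ∧
    -- moreover (D⁻)₊ ⊆ D⁻ ∩ D⁺
    (∀ F : ℤ → ℕ → R, gmem 𝒜 F → isDM F →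
      gmem 𝒜 (gPlus F) ∧ isDM (gPlus F) ∧ isDP (gPlus F)) ∧
    -- and (D⁺)₋ ⊆ D⁻ ∩ D⁺
    (∀ F : ℤ → ℕ → R, gmem 𝒜 F → isDP F →
      gmem 𝒜 (gMinus F) ∧ isDM (gMinus F) ∧ isDP (gMinus F)) := by
  refine ⟨?_, ?_, ?_, ?_, ?_, ?_, ?_, ?_⟩
  · intro F G _ _ hF hG n m
    obtain ⟨k₁, hk₁⟩ := hF; obtain ⟨k₂, hk₂⟩ := hG
    exact support_gTerm_finite d hk₁ hk₂ n m
  · intro F G hFm hGm hF hG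
    exact ⟨gmem_gMul d hgmul hgder hFm hGm hF hG, isDP_gMul d hF hG⟩
  · intro F G H _ _ _ hF hG hH
    exact gMul_assoc d hF hG hH
  · intro F G H _ _ _ hF hG hH
    exact ⟨gMul_add_right d hF hG hH, gMul_add_left d hF hG hH⟩
  · intro c F G _ _ hF hG
    exact ⟨gMul_smul_left d c hF hG, gMul_smul_right d c hF hG⟩
  · intro F _ _
    exact ⟨gOne_mul d F, gMul_one d F⟩
  · intro F hFm hF
    exact gPlus_props hFm hF
  · intro F hFm hF
    exact gMinus_props hFm hF
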